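/- Under the square-root (QED) scaling a_N = N + β√N + o(√N) with β ∈ ℝ, the Erlang-B blocking probability satisfies √N · E(N, a_N) → φ(β)/(1 - Φ(β)) as N → ∞, where φ and Φ are the standard normal density and CDF. -/

import Mathlib

open Filter Real MeasureTheory

noncomputable def ErlangB (N : ℕ) (a : ℝ) : ℝ :=
  (a ^ N / (Nat.factorial N : ℝ)) / (∑ j ∈ Finset.range (N + 1), a ^ j / (Nat.factorial j : ℝ))

/-- Standard normal density. -/
noncomputable def stdNormalPDF (x : ℝ) : ℝ := (1 / Real.sqrt (2 * Real.pi)) * Real.exp (-x ^ 2 / 2)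

/-- Standard normal CDF. -/
noncomputable def stdNormalCDF (x : ℝ) : ℝ := ∫ t in Set.Iic x, stdNormalPDF t

namespace ErlangAux
open Finset

lemma sum_range_cast (k : ℕ) : ∑ i ∈ range k, (i:ℝ) = (k:ℝ) * ((k:ℝ) - 1) / 2 := by
  induction k with
  | zero => simp
  | succ n ih => rw [Finset.sum_range_succ, ih]; push_cast; ring

noncomputable def T (N : ℕ) (a : ℝ) (k : ℕ) : ℝ := (Nat.descFactorial N k : ℝ) / a ^ k

lemma T_prod (N : ℕ) (a : ℝ) (k : ℕ) :
    T N a k = ∏ i ∈ range k, ((N - i : ℕ) : ℝ) / a := by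
  rw [T, Nat.descFactorial_eq_prod_range, Finset.prod_div_distrib, Finset.prod_const]
  simp [div_eq_mul_inv]

lemma T_nonneg {N : ℕ} {a : ℝ} (ha : 0 ≤ a) (k : ℕ) : 0 ≤ T N a k :=
  div_nonneg (by positivity) (by positivity)

lemma T_zero (N : ℕ) (a : ℝ) : T N a 0 = 1 := by simp [T]

/-- termwise identity -/
lemma term_eq {N k : ℕ} (hk : k ≤ N) {a : ℝ} (ha : 0 < a) :
    a ^ (N - k) / (Nat.factorial (N - k) : ℝ) =
      (a ^ N / (Nat.factorial N : ℝ)) * T N a k := by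
  have h1 : ((N - k).factorial : ℝ) * (Nat.descFactorial N k : ℝ) = (N.factorial : ℝ) := by
    exact_mod_cast congrArg (Nat.cast : ℕ → ℝ) (Nat.factorial_mul_descFactorial hk)
  have h2 : a ^ (N - k) * a ^ k = a ^ N := by
    rw [← pow_add, Nat.sub_add_cancel hk]
  have hf : (Nat.factorial (N - k) : ℝ) ≠ 0 := Nat.cast_ne_zero.2 (Nat.factorial_ne_zero _)
  have hF : (Nat.factorial N : ℝ) ≠ 0 := Nat.cast_ne_zero.2 (Nat.factorial_ne_zero _)
  rw [T]
  field_simp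
  calc a ^ (N - k) * ↑N.factorial * a ^ k = (a ^ (N-k) * a ^ k) * ↑N.factorial := by ring
    _ = a ^ N * (↑(N - k).factorial * ↑(N.descFactorial k)) := by rw [h2, h1]
    _ = ↑(N - k).factorial * a ^ N * ↑(N.descFactorial k) := by ring

lemma sum_eq (N : ℕ) {a : ℝ} (ha : 0 < a) :
    ∑ j ∈ range (N + 1), a ^ j / (Nat.factorial j : ℝ) =
      (a ^ N / (Nat.factorial N : ℝ)) * ∑ k ∈ range (N + 1), T N a k := by
  rw [← Finset.sum_range_reflect (fun j => a ^ j / (Nat.factorial j : ℝ)) (N + 1),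
    Finset.mul_sum]
  refine Finset.sum_congr rfl fun k hk => ?_
  have hk' : k ≤ N := Nat.lt_succ_iff.mp (Finset.mem_range.mp hk)
  have : N + 1 - 1 - k = N - k := by omega
  rw [this, term_eq hk' ha]

noncomputable def g (N : ℕ) (a : ℝ) (t : ℝ) : ℝ :=
  if ⌊t * Real.sqrt N⌋₊ ≤ N then T N a ⌊t * Real.sqrt N⌋₊ else 0

lemma g_measurable (N : ℕ) (a : ℝ) : Measurable (g N a) := by
  have h1 : Measurable fun t : ℝ => ⌊t * Real.sqrt N⌋₊ :=
    Nat.measurable_floor.comp (measurable_id.mul_const _)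
  have h2 : Measurable fun k : ℕ => if k ≤ N then T N a k else 0 := measurable_from_nat
  exact h2.comp h1

lemma g_nonneg {N : ℕ} {a : ℝ} (ha : 0 ≤ a) (t : ℝ) : 0 ≤ g N a t := by
  unfold g; split
  · exact T_nonneg ha _
  · exact le_rfl

lemma g_le_sum {N : ℕ} {a : ℝ} (ha : 0 ≤ a) (t : ℝ) :
    g N a t ≤ ∑ k ∈ range (N + 1), T N a k := by
  unfold g
  split
  · exact Finset.single_le_sum (fun k _ => T_nonneg ha k)
      (Finset.mem_range.mpr (Nat.lt_succ_of_le (by assumption)))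
  · exact Finset.sum_nonneg fun k _ => T_nonneg ha k

lemma g_integral {N : ℕ} (hN : 1 ≤ N) {a : ℝ} (ha : 0 ≤ a) :
    ∫ t in Set.Ioi (0:ℝ), g N a t = (∑ k ∈ range (N + 1), T N a k) / Real.sqrt N := by
  have hN' : (0:ℝ) < N := by exact_mod_cast hN
  have hr : (0:ℝ) < Real.sqrt N := Real.sqrt_pos.2 hN'
  set r := Real.sqrt N with hrdef
  set B : ℝ := (N + 1) / r with hB
  have hB0 : 0 ≤ B := by positivity
  -- g vanishes on Ioi B
  have hzero : ∀ t ∈ Set.Ioi B, g N a t = 0 := by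
    intro t ht
    have h1 : (N + 1 : ℝ) ≤ t * r := by
      rw [Set.mem_Ioi, hB, div_lt_iff₀ hr] at ht
      linarith
    have h2 : N + 1 ≤ ⌊t * r⌋₊ := by exact_mod_cast Nat.le_floor (by push_cast; exact h1)
    unfold g
    rw [← hrdef, if_neg (by omega)]
  -- split
  have hsplit : Set.Ioi (0:ℝ) = Set.Ioc 0 B ∪ Set.Ioi B := (Set.Ioc_union_Ioi_eq_Ioi hB0).symm
  have hmeas := (g_measurable N a).aestronglyMeasurable (μ := volume)
  have hint1 : IntegrableOn (g N a) (Set.Ioc 0 B) := by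
    apply Measure.integrableOn_of_bounded (M := ∑ k ∈ range (N + 1), T N a k)
    · exact (measure_Ioc_lt_top).ne
    · exact hmeas
    · filter_upwards with t
      rw [Real.norm_eq_abs, abs_of_nonneg (g_nonneg ha t)]
      exact g_le_sum ha t
  have hint2 : IntegrableOn (g N a) (Set.Ioi B) := by
    apply IntegrableOn.congr_fun (integrableOn_zero) _ measurableSet_Ioi
    intro t ht; exact (hzero t ht).symm
  rw [hsplit, setIntegral_union (Set.Ioc_disjoint_Ioi le_rfl) measurableSet_Ioi hint1 hint2]
  have hz2 : ∫ t in Set.Ioi B, g N a t = 0 := by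
    rw [setIntegral_congr_fun measurableSet_Ioi (g := fun _ => 0) (fun t ht => hzero t ht)]
    simp
  rw [hz2, add_zero]
  -- now Ioc 0 B as interval integral, partitioned
  have hIoc : ∫ t in Set.Ioc 0 B, g N a t = ∫ t in (0:ℝ)..B, g N a t :=
    (intervalIntegral.integral_of_le hB0).symm
  rw [hIoc]
  -- partition points
  set p : ℕ → ℝ := fun j => j / r with hp
  have hpj : ∀ j : ℕ, p j ≤ p (j+1) := by
    intro j
    simp only [hp]; push_cast; gcongr; linarith
  have hae : ∀ j : ℕ, j ≤ N →
      ∀ᵐ t : ℝ, t ∈ Set.uIoc (p j) (p (j+1)) → g N a t = T N a j := by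
    intro j hjN
    have hq : ∀ᵐ t : ℝ, t ≠ p (j+1) := by
      rw [ae_iff]
      have : {t : ℝ | ¬ t ≠ p (j+1)} = {p (j+1)} := by ext t; simp
      rw [this]; exact measure_singleton _
    filter_upwards [hq] with t htq ht
    rw [Set.uIoc_of_le (hpj j)] at ht
    obtain ⟨ht1, ht2⟩ := ht
    have ht2' : t < p (j+1) := lt_of_le_of_ne ht2 htq
    have h1 : (j : ℝ) ≤ t * r := by
      rw [hp] at ht1; simp only [] at ht1
      rw [div_lt_iff₀ hr] at ht1; linarith
    have h2 : t * r < (j:ℝ) + 1 := by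
      rw [hp] at ht2'; simp only [] at ht2'
      rw [lt_div_iff₀ hr] at ht2'; push_cast at ht2'; linarith
    have ht0 : 0 ≤ t := le_trans (div_nonneg (Nat.cast_nonneg j) hr.le) ht1.le
    have hfl : ⌊t * r⌋₊ = j := by
      rw [Nat.floor_eq_iff (mul_nonneg ht0 hr.le)]
      exact ⟨h1, by exact_mod_cast h2⟩
    unfold g
    rw [← hrdef, hfl, if_pos hjN]
  have key : ∀ j ∈ range (N + 1),
      (∫ t in p j..p (j+1), g N a t) = T N a j / r := by
    intro j hj
    have hjN : j ≤ N := Nat.lt_succ_iff.mp (Finset.mem_range.mp hj)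
    rw [intervalIntegral.integral_congr_ae (hae j hjN), intervalIntegral.integral_const]
    have : p (j+1) - p j = 1 / r := by
      rw [hp]; push_cast; field_simp; ring
    rw [this, smul_eq_mul]
    ring
  have hadj : ∀ j < N + 1, IntervalIntegrable (g N a) volume (p j) (p (j+1)) := by
    intro j hj
    have hjN : j ≤ N := Nat.lt_succ_iff.mp hj
    apply (intervalIntegrable_const (c := T N a j)).congr_ae
    exact EventuallyEq.symm
      ((ae_restrict_iff' (measurableSet_uIoc (a := p j) (b := p (j+1)))).mpr (hae j hjN))
  have hsum := intervalIntegral.sum_integral_adjacent_intervals hadj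
  have hp0 : p 0 = 0 := by simp [hp]
  have hpN : p (N + 1) = B := by rw [hp, hB]; push_cast; ring_nf
  rw [hp0, hpN] at hsum
  rw [← hsum]
  rw [Finset.sum_congr rfl key, ← Finset.sum_div]

lemma cast_nonneg_mul (k : ℕ) : (0:ℝ) ≤ (k:ℝ) * ((k:ℝ) - 1) := by
  rcases Nat.eq_zero_or_pos k with h | h
  · simp [h]
  · have : (1:ℝ) ≤ k := by exact_mod_cast h
    nlinarith

lemma floor_quad {s : ℝ} (hs : 0 ≤ s) : s^2 - 3*s ≤ (⌊s⌋₊:ℝ) * ((⌊s⌋₊:ℝ) - 1) := by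
  set k := ⌊s⌋₊
  have h1 : s < (k:ℝ) + 1 := Nat.lt_floor_add_one s
  have h2 : (k:ℝ) ≤ s := Nat.floor_le hs
  have h0 : (0:ℝ) ≤ (k:ℝ) * ((k:ℝ) - 1) := cast_nonneg_mul k
  rcases le_or_gt s 3 with h | h
  · nlinarith
  · nlinarith

lemma g_bound {M t : ℝ} (ht : 0 < t) (hM : 0 ≤ M) {N : ℕ} (hN : 1 ≤ N) {a : ℝ}
    (ha : 0 < a) (hc : |a - N| ≤ M * Real.sqrt N) (h2M : 2 * M ≤ Real.sqrt N) :
    g N a t ≤ Real.exp ((2*M + 3/2) * t - t^2/2) := by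
  set s := Real.sqrt N with hs
  have hN' : (0:ℝ) < N := by exact_mod_cast hN
  have hsp : 0 < s := Real.sqrt_pos.2 hN'
  have hss : s * s = N := Real.mul_self_sqrt hN'.le
  unfold g
  rw [← hs]
  split
  case isFalse => positivity
  case isTrue hkN =>
    set k := ⌊t * s⌋₊ with hk
    have hts : 0 ≤ t * s := by positivity
    have hk_le : (k:ℝ) ≤ t * s := Nat.floor_le hts
    -- N ≤ a * (1 + 2M/s)
    have hMa : (N:ℝ) ≤ a * (1 + 2*M/s) := by
      have haN : (N:ℝ) - M * s ≤ a := by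
        have h' := (abs_le.mp hc).1; linarith
      have heq : a * (1 + 2*M/s) = (a*s + 2*M*a)/s := by field_simp
      rw [heq, le_div_iff₀ hsp]
      nlinarith [mul_le_mul_of_nonneg_right haN hsp.le,
        mul_nonneg (mul_nonneg hM hsp.le) (sub_nonneg.2 h2M), hss,
        mul_le_mul_of_nonneg_left haN (by linarith : (0:ℝ) ≤ 2*M)]
    -- step 1: product bound
    rw [T_prod]
    have step1 : ∀ i ∈ range k, ((N - i : ℕ):ℝ) / a ≤ ((N:ℝ)/a) * Real.exp (-((i:ℝ)/N)) := by
      intro i hi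
      have hik : i < k := Finset.mem_range.mp hi
      have hiN : i ≤ N := le_trans (Nat.le_of_lt hik) hkN
      rw [Nat.cast_sub hiN]
      have hexp : 1 - (i:ℝ)/N ≤ Real.exp (-((i:ℝ)/N)) := by
        have := Real.add_one_le_exp (-((i:ℝ)/N)); linarith
      rw [div_le_iff₀ ha]
      have h1 : ((N:ℝ) - i) ≤ N * Real.exp (-((i:ℝ)/N)) := by
        have := mul_le_mul_of_nonneg_left hexp hN'.le
        calc (N:ℝ) - i = N * (1 - (i:ℝ)/N) := by field_simp
          _ ≤ N * Real.exp (-((i:ℝ)/N)) := this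
      calc (N:ℝ) - i ≤ N * Real.exp (-((i:ℝ)/N)) := h1
        _ = (N:ℝ)/a * Real.exp (-((i:ℝ)/N)) * a := by field_simp
    have hnonneg : ∀ i ∈ range k, (0:ℝ) ≤ ((N - i : ℕ):ℝ) / a := by
      intro i _; positivity
    have step2 : (∏ i ∈ range k, ((N - i : ℕ):ℝ) / a) ≤
        ∏ i ∈ range k, ((N:ℝ)/a) * Real.exp (-((i:ℝ)/N)) :=
      Finset.prod_le_prod hnonneg step1
    have step3 : (∏ i ∈ range k, ((N:ℝ)/a) * Real.exp (-((i:ℝ)/N))) =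
        ((N:ℝ)/a)^k * Real.exp (-((k:ℝ) * ((k:ℝ)-1)/2) / N) := by
      rw [Finset.prod_mul_distrib, Finset.prod_const, Finset.card_range, ← Real.exp_sum]
      congr 1
      rw [Finset.sum_neg_distrib, ← Finset.sum_div, sum_range_cast, neg_div]
    -- (N/a)^k ≤ exp(2Mt)
    have hNa : (N:ℝ)/a ≤ Real.exp (2*M/s) := by
      rw [div_le_iff₀ ha]
      calc (N:ℝ) ≤ a * (1 + 2*M/s) := hMa
        _ ≤ a * Real.exp (2*M/s) := by
            have := Real.add_one_le_exp (2*M/s)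
            nlinarith
        _ = Real.exp (2*M/s) * a := by ring
    have step4 : ((N:ℝ)/a)^k ≤ Real.exp (2*M*t) := by
      calc ((N:ℝ)/a)^k ≤ (Real.exp (2*M/s))^k := by
            apply pow_le_pow_left₀ (by positivity) hNa
        _ = Real.exp (2*M/s*k) := by rw [← Real.exp_nat_mul]; ring_nf
        _ ≤ Real.exp (2*M*t) := by
            apply Real.exp_le_exp.2
            rw [div_mul_eq_mul_div, div_le_iff₀ hsp]
            nlinarith
    have step5 : Real.exp (-((k:ℝ) * ((k:ℝ)-1)/2) / N) ≤ Real.exp (-(t^2/2) + 3*t/2) := by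
      apply Real.exp_le_exp.2
      have hq := floor_quad hts
      rw [← hk] at hq
      have hN1 : (1:ℝ) ≤ N := by exact_mod_cast hN
      have hs1 : (1:ℝ) ≤ s := by nlinarith
      have hsN : s ≤ N := by nlinarith
      have hts2 : (t*s)^2 = t^2 * (N:ℝ) := by rw [mul_pow, ← hss]; ring
      rw [div_le_iff₀ hN']
      have hexp2 : (-(t^2/2) + 3*t/2) * (N:ℝ) = -(t^2*(N:ℝ))/2 + 3*(t*(N:ℝ))/2 := by ring
      linarith [hq, hts2, mul_le_mul_of_nonneg_left hsN ht.le, hexp2]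
    calc (∏ i ∈ range k, ((N - i : ℕ):ℝ) / a) ≤ ((N:ℝ)/a)^k * Real.exp (-((k:ℝ) * ((k:ℝ)-1)/2) / N) := by
          rw [← step3]; exact step2
      _ ≤ Real.exp (2*M*t) * Real.exp (-(t^2/2) + 3*t/2) := by
          apply mul_le_mul step4 step5 (by positivity) (by positivity)
      _ = Real.exp ((2*M + 3/2) * t - t^2/2) := by rw [← Real.exp_add]; ring_nf

lemma log_est {u : ℝ} (hu : -(1/2) ≤ u) : |Real.log (1+u) - u| ≤ 2*u^2 := by
  have h0 : (0:ℝ) < 1 + u := by linarith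
  have h1 : Real.log (1+u) ≤ u := by
    have := Real.log_le_sub_one_of_pos h0; linarith
  have h2 : 1 - (1+u)⁻¹ ≤ Real.log (1+u) := by
    have := Real.log_le_sub_one_of_pos (inv_pos.2 h0)
    rw [Real.log_inv] at this; linarith
  have h3 : u - 2*u^2 ≤ 1 - (1+u)⁻¹ := by
    rw [← sub_nonneg]
    have key : 1 - (1+u)⁻¹ - (u - 2*u^2) = (u^2*(1+2*u))/(1+u) := by
      field_simp; ring
    rw [key]
    apply div_nonneg _ h0.le
    nlinarith [sq_nonneg u]
  have habs1 : Real.log (1+u) - u ≤ 2*u^2 := by nlinarith [sq_nonneg u]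
  have habs2 : -(2*u^2) ≤ Real.log (1+u) - u := by linarith
  exact abs_le.2 ⟨habs2, habs1⟩

lemma sqrt_nat_tendsto : Tendsto (fun N : ℕ => Real.sqrt N) atTop atTop := by
  refine tendsto_atTop_atTop.2 fun b => ⟨⌈b⌉₊^2, fun N hN => ?_⟩
  have h1 : ((⌈b⌉₊:ℝ))^2 ≤ (N:ℝ) := by exact_mod_cast hN
  calc b ≤ (⌈b⌉₊:ℝ) := Nat.le_ceil b
    _ = Real.sqrt ((⌈b⌉₊:ℝ)^2) := (Real.sqrt_sq (Nat.cast_nonneg _)).symm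
    _ ≤ Real.sqrt N := Real.sqrt_le_sqrt h1

set_option maxHeartbeats 2000000 in
lemma g_tendsto (a : ℕ → ℝ) (β : ℝ) (hpos : ∀ N, 0 < a N)
    (hscale : Tendsto (fun N : ℕ => (a N - N) / Real.sqrt N) atTop (nhds β))
    {t : ℝ} (ht : 0 < t) :
    Tendsto (fun N => g N (a N) t) atTop (nhds (Real.exp (-(β*t) - t^2/2))) := by
  set c : ℕ → ℝ := fun N => (a N - N) / Real.sqrt N with hc_def
  set M : ℝ := |β| + 1 with hM_def
  have hM0 : 0 ≤ M := by positivity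
  have hMev : ∀ᶠ N in atTop, |c N| ≤ M := by
    have h : ∀ᶠ N in atTop, c N ∈ Set.Icc (β - 1) (β + 1) :=
      hscale (Icc_mem_nhds (show β - 1 < β by linarith) (show β < β + 1 by linarith))
    filter_upwards [h] with N hN
    rw [Set.mem_Icc] at hN
    rw [abs_le]
    have h1 := neg_abs_le β
    have h2 := le_abs_self β
    exact ⟨by linarith [hN.1], by linarith [hN.2]⟩
  set k : ℕ → ℕ := fun N => ⌊t * Real.sqrt N⌋₊ with hk_def
  have hsq := sqrt_nat_tendsto
  have hinv0 : Tendsto (fun N : ℕ => (Real.sqrt N)⁻¹) atTop (nhds 0) :=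
    hsq.inv_tendsto_atTop
  have hev1 : ∀ᶠ N : ℕ in atTop, 1 ≤ N := eventually_ge_atTop 1
  -- k/√N → t
  have hkdiv : Tendsto (fun N => (k N : ℝ) / Real.sqrt N) atTop (nhds t) := by
    have hlow : Tendsto (fun N : ℕ => t - (Real.sqrt N)⁻¹) atTop (nhds t) := by
      simpa using tendsto_const_nhds.sub hinv0
    refine tendsto_of_tendsto_of_tendsto_of_le_of_le' hlow tendsto_const_nhds ?_ ?_
    · filter_upwards [hev1] with N hN
      have hN' : (0:ℝ) < N := by exact_mod_cast hN
      have hsp : 0 < Real.sqrt N := Real.sqrt_pos.2 hN'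
      rw [le_div_iff₀ hsp]
      have h2 : t * Real.sqrt N < (k N : ℝ) + 1 := Nat.lt_floor_add_one _
      have h3 : (t - (Real.sqrt N)⁻¹) * Real.sqrt N = t * Real.sqrt N - 1 := by
        field_simp
      linarith
    · filter_upwards [hev1] with N hN
      have hN' : (0:ℝ) < N := by exact_mod_cast hN
      have hsp : 0 < Real.sqrt N := Real.sqrt_pos.2 hN'
      rw [div_le_iff₀ hsp]
      have h1 : (k N : ℝ) ≤ t * Real.sqrt N := Nat.floor_le (by positivity)
      linarith
  -- N/a → 1
  have haN : Tendsto (fun N => a N / (N:ℝ)) atTop (nhds 1) := by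
    have h1 : Tendsto (fun N : ℕ => 1 + c N * (Real.sqrt N)⁻¹) atTop (nhds 1) := by
      have := hscale.mul hinv0
      simpa using tendsto_const_nhds.add (hscale.mul hinv0)
    apply h1.congr'
    filter_upwards [hev1] with N hN
    have hN' : (0:ℝ) < N := by exact_mod_cast hN
    have hsp : 0 < Real.sqrt N := Real.sqrt_pos.2 hN'
    have hss : Real.sqrt N * Real.sqrt N = (N:ℝ) := Real.mul_self_sqrt hN'.le
    rw [hc_def]
    field_simp
    rw [Real.sq_sqrt hN'.le]; ring
  have hNa : Tendsto (fun N : ℕ => (N:ℝ) / a N) atTop (nhds 1) := by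
    have := haN.inv₀ one_ne_zero
    simp only [inv_div, inv_one] at this
    exact this
  -- the log sum pieces
  set u : ℕ → ℕ → ℝ := fun N i => ((N:ℝ) - i - a N) / a N with hu_def
  set S : ℕ → ℝ := fun N => ∑ i ∈ range (k N), Real.log (1 + u N i) with hS_def
  set m : ℕ → ℝ := fun N => ∑ i ∈ range (k N), u N i with hm_def
  -- closed form for m
  have hm_closed : ∀ᶠ N in atTop, m N =
      -(((k N:ℝ)/Real.sqrt N) * c N * ((N:ℝ)/a N))
      - (((k N:ℝ)/Real.sqrt N) * (((k N:ℝ)-1)/Real.sqrt N) * ((N:ℝ)/a N))/2 := by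
    filter_upwards [hev1] with N hN
    have hN' : (0:ℝ) < N := by exact_mod_cast hN
    set s : ℝ := Real.sqrt N with hs
    have hsp : 0 < s := Real.sqrt_pos.2 hN'
    have hss : s * s = (N:ℝ) := Real.mul_self_sqrt hN'.le
    have ha := hpos N
    have hsum : m N = ((k N:ℝ) * ((N:ℝ) - a N) - (k N:ℝ)*((k N:ℝ)-1)/2) / a N := by
      rw [hm_def]
      simp only [hu_def]
      rw [← Finset.sum_div]
      congr 1
      have hcong : ∀ i ∈ range (k N), (N:ℝ) - (i:ℝ) - a N = ((N:ℝ) - a N) - (i:ℝ) := by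
        intros; ring
      rw [Finset.sum_congr rfl hcong, Finset.sum_sub_distrib, Finset.sum_const,
        Finset.card_range, sum_range_cast, nsmul_eq_mul]
    rw [hsum]
    have hca : c N = (a N - (N:ℝ)) / s := by rw [hc_def]
    rw [hca, ← hss]
    field_simp
    ring
  have hk1div : Tendsto (fun N : ℕ => ((k N:ℝ)-1)/Real.sqrt N) atTop (nhds t) := by
    have h := hkdiv.sub hinv0
    rw [sub_zero] at h
    apply h.congr
    intro N
    rw [sub_div]
    congr 1
    rw [one_div]
  have hm_lim : Tendsto m atTop (nhds (-(β*t) - t^2/2)) := by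
    have base : Tendsto (fun N => -(((k N:ℝ)/Real.sqrt N) * c N * ((N:ℝ)/a N))
        - (((k N:ℝ)/Real.sqrt N) * (((k N:ℝ)-1)/Real.sqrt N) * ((N:ℝ)/a N))/2) atTop
        (nhds (-(t * β * 1) - (t * t * 1)/2)) :=
      Tendsto.sub (((hkdiv.mul hscale).mul hNa)).neg
        ((((hkdiv.mul hk1div).mul hNa)).div_const 2)
    have hval : -(t * β * 1) - (t * t * 1)/2 = -(β*t) - t^2/2 := by ring
    rw [hval] at base
    exact base.congr' (EventuallyEq.symm hm_closed)
  -- error control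
  have herr : Tendsto (fun N => S N - m N) atTop (nhds 0) := by
    have hbound : ∀ᶠ N in atTop, |S N - m N| ≤ 8*t*(M+t)^2 * (Real.sqrt N)⁻¹ := by
      filter_upwards [hev1, hMev, hsq.eventually_ge_atTop (4*(M+t)),
        hsq.eventually_ge_atTop (2*M)] with N hN hMc hs4 hs2
      have hN' : (0:ℝ) < N := by exact_mod_cast hN
      set s : ℝ := Real.sqrt N with hs
      have hsp : 0 < s := Real.sqrt_pos.2 hN'
      have hss : s * s = (N:ℝ) := Real.mul_self_sqrt hN'.le
      have ha := hpos N
      have hk_le : (k N:ℝ) ≤ t * s := Nat.floor_le (by positivity)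
      have hcabs := abs_le.mp hMc
      have haN2 : (N:ℝ)/2 ≤ a N := by
        have hca : c N * s = a N - (N:ℝ) := by rw [hc_def]; field_simp; rw [hs]
        have h1 : -(M*s) ≤ c N * s := by
          simpa [neg_mul] using mul_le_mul_of_nonneg_right hcabs.1 hsp.le
        nlinarith
      have hMt : 0 < M + t := by linarith
      have hu_abs : ∀ i ∈ range (k N), |u N i| ≤ 2*(M+t) * s⁻¹ := by
        intro i hi
        have hik : (i:ℝ) < k N := by exact_mod_cast Finset.mem_range.mp hi
        have hca : c N * s = a N - (N:ℝ) := by rw [hc_def]; field_simp; rw [hs]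
        have hnum : |(N:ℝ) - i - a N| ≤ (M+t) * s := by
          rw [abs_le]
          have habs1 : |a N - (N:ℝ)| ≤ M * s := by
            rw [← hca, abs_mul, abs_of_pos hsp]
            exact mul_le_mul_of_nonneg_right hMc hsp.le
          have h2 := abs_le.mp habs1
          constructor
          · nlinarith [hk_le]
          · have hi0 : (0:ℝ) ≤ i := Nat.cast_nonneg i
            nlinarith
        rw [hu_def]
        simp only
        rw [abs_div, abs_of_pos ha, div_le_iff₀ ha]
        calc |(N:ℝ) - i - a N| ≤ (M+t) * s := hnum
          _ ≤ 2*(M+t) * s⁻¹ * a N := by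
              rw [← sub_nonneg]
              have heq : 2*(M+t) * s⁻¹ * a N - (M+t)*s = ((M+t) * (2 * a N - s*s)) * s⁻¹ := by
                field_simp
              rw [heq]
              apply mul_nonneg _ (inv_nonneg.2 hsp.le)
              nlinarith
      have hu_half : ∀ i ∈ range (k N), -(1/2 : ℝ) ≤ u N i := by
        intro i hi
        have h1 := (abs_le.mp (hu_abs i hi)).1
        have h2 : 2*(M+t) * s⁻¹ ≤ 1/2 := by
          nlinarith [mul_inv_cancel₀ hsp.ne', inv_nonneg.2 hsp.le,
            mul_le_mul_of_nonneg_right hs4 (inv_nonneg.2 hsp.le)]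
        linarith
      have hterm : ∀ i ∈ range (k N), |Real.log (1 + u N i) - u N i| ≤ 8*(M+t)^2/(s*s) := by
        intro i hi
        calc |Real.log (1 + u N i) - u N i| ≤ 2*(u N i)^2 := log_est (hu_half i hi)
          _ ≤ 2*(2*(M+t) * s⁻¹)^2 := by
              have h1 := hu_abs i hi
              have h2 := abs_nonneg (u N i)
              nlinarith [sq_abs (u N i)]
          _ = 8*(M+t)^2/(s*s) := by field_simp; ring
      have hsum_eq : S N - m N = ∑ i ∈ range (k N), (Real.log (1 + u N i) - u N i) := by
        rw [hS_def, hm_def, Finset.sum_sub_distrib]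
      rw [hsum_eq]
      calc |∑ i ∈ range (k N), (Real.log (1 + u N i) - u N i)|
          ≤ ∑ i ∈ range (k N), |Real.log (1 + u N i) - u N i| :=
            Finset.abs_sum_le_sum_abs _ _
        _ ≤ ∑ i ∈ range (k N), 8*(M+t)^2/(s*s) := Finset.sum_le_sum hterm
        _ = (k N:ℝ) * (8*(M+t)^2/(s*s)) := by rw [Finset.sum_const, Finset.card_range, nsmul_eq_mul]
        _ ≤ (t*s) * (8*(M+t)^2/(s*s)) := by
            apply mul_le_mul_of_nonneg_right hk_le (by positivity)
        _ = 8*t*(M+t)^2 * s⁻¹ := by field_simp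
    have h0 : Tendsto (fun N : ℕ => 8*t*(M+t)^2 * (Real.sqrt N)⁻¹) atTop (nhds 0) := by
      simpa using hinv0.const_mul (8*t*(M+t)^2)
    have habs : Tendsto (fun N => |S N - m N|) atTop (nhds 0) :=
      squeeze_zero' (Eventually.of_forall fun N => abs_nonneg _) hbound h0
    exact (tendsto_zero_iff_abs_tendsto_zero _).mpr habs
  have hS : Tendsto S atTop (nhds (-(β*t) - t^2/2)) := by
    have := herr.add hm_lim
    rw [zero_add] at this
    apply this.congr
    intro N; ring
  -- eventual identification of g with exp ∘ S
  have hgev : ∀ᶠ N in atTop, g N (a N) t = Real.exp (S N) := by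
    filter_upwards [hev1, hsq.eventually_ge_atTop t] with N hN hts
    have hN' : (0:ℝ) < N := by exact_mod_cast hN
    have hsp : 0 < Real.sqrt N := Real.sqrt_pos.2 hN'
    have hss : Real.sqrt N * Real.sqrt N = (N:ℝ) := Real.mul_self_sqrt hN'.le
    have ha := hpos N
    have hkN : k N ≤ N := by
      have h1 : t * Real.sqrt N ≤ (N:ℝ) := by nlinarith
      have h2 := Nat.floor_mono h1
      rwa [Nat.floor_natCast] at h2
    have hfactor : ∀ i ∈ range (k N), (1 : ℝ) + u N i = ((N:ℝ) - i)/ a N := by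
      intro i hi
      rw [hu_def]
      field_simp
      ring
    have hfacpos : ∀ i ∈ range (k N), (0:ℝ) < 1 + u N i := by
      intro i hi
      rw [hfactor i hi]
      have hik : i < k N := Finset.mem_range.mp hi
      have hiN : (i:ℝ) < N := by exact_mod_cast lt_of_lt_of_le hik hkN
      apply div_pos (by linarith) ha
    have hg1 : g N (a N) t = T N (a N) (k N) := if_pos hkN
    rw [hg1, T_prod, hS_def]
    simp only
    rw [Real.exp_sum]
    apply Finset.prod_congr rfl
    intro i hi
    rw [Real.exp_log (hfacpos i hi), hfactor i hi]
    have hik : i < k N := Finset.mem_range.mp hi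
    have hiN : i ≤ N := le_trans hik.le hkN
    rw [Nat.cast_sub hiN]
  have hexp := (Real.continuous_exp.tendsto _).comp hS
  exact Tendsto.congr' (EventuallyEq.symm hgev) hexp


lemma integrable_expquad (K : ℝ) : Integrable (fun t : ℝ => Real.exp (K*t - t^2/2)) := by
  have h : Integrable (fun t : ℝ => Real.exp (-(1/2:ℝ) * t^2)) := by
    apply integrable_exp_neg_mul_sq; norm_num
  have h2 := (h.comp_sub_right K).const_mul (Real.exp (K^2/2))
  apply h2.congr
  apply Eventually.of_forall
  intro x
  show Real.exp (K^2/2) * Real.exp (-(1/2:ℝ) * (x - K)^2) = Real.exp (K*x - x^2/2)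
  rw [← Real.exp_add]
  congr 1
  ring

lemma integrable_pdf : Integrable stdNormalPDF := by
  have h : Integrable (fun t : ℝ => Real.exp (-(1/2:ℝ) * t^2)) := by
    apply integrable_exp_neg_mul_sq; norm_num
  apply (h.const_mul (1 / Real.sqrt (2 * Real.pi))).congr
  apply Eventually.of_forall
  intro x
  show (1 / Real.sqrt (2 * Real.pi)) * Real.exp (-(1/2:ℝ) * x^2) = stdNormalPDF x
  rw [stdNormalPDF]
  congr 2
  ring

lemma pdf_total : ∫ x : ℝ, stdNormalPDF x = 1 := by
  have h : ∫ x : ℝ, Real.exp (-(1/2:ℝ) * x^2) = Real.sqrt (Real.pi / (1/2)) :=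
    integral_gaussian (1/2)
  have h2 : ∫ x : ℝ, stdNormalPDF x
      = (1 / Real.sqrt (2 * Real.pi)) * ∫ x : ℝ, Real.exp (-(1/2:ℝ) * x^2) := by
    rw [← integral_const_mul]
    congr 1
    funext x
    rw [stdNormalPDF]
    congr 2
    ring
  rw [h2, h]
  have hpi : Real.pi / (1/2) = 2 * Real.pi := by ring
  rw [hpi]
  have : 0 < Real.sqrt (2 * Real.pi) := Real.sqrt_pos.2 (by positivity)
  field_simp

lemma pdf_pos (x : ℝ) : 0 < stdNormalPDF x := by
  rw [stdNormalPDF]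
  have : 0 < Real.sqrt (2 * Real.pi) := Real.sqrt_pos.2 (by positivity)
  positivity

/-- translation of set integral -/
lemma integral_Ioi_shift (f : ℝ → ℝ) (β : ℝ) (hf : Integrable f) :
    ∫ s in Set.Ioi β, f s = ∫ t in Set.Ioi (0:ℝ), f (t + β) := by
  rw [← integral_indicator measurableSet_Ioi, ← integral_indicator measurableSet_Ioi]
  rw [← integral_add_right_eq_self (fun x => Set.indicator (Set.Ioi β) f x) β]
  congr 1
  funext x
  rw [Set.indicator, Set.indicator]
  by_cases hx : x ∈ Set.Ioi (0:ℝ)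
  · rw [if_pos hx, if_pos (by simp only [Set.mem_Ioi] at hx ⊢; linarith)]
  · rw [if_neg hx, if_neg (by simp only [Set.mem_Ioi] at hx ⊢; linarith)]

lemma one_sub_cdf (β : ℝ) : 1 - stdNormalCDF β
    = stdNormalPDF β * ∫ t in Set.Ioi (0:ℝ), Real.exp (-(β*t) - t^2/2) := by
  have hsplit : stdNormalCDF β + ∫ s in Set.Ioi β, stdNormalPDF s = 1 := by
    rw [stdNormalCDF, intervalIntegral.integral_Iic_add_Ioi integrable_pdf.integrableOn
      integrable_pdf.integrableOn, pdf_total]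
  have hshift : ∫ s in Set.Ioi β, stdNormalPDF s
      = ∫ t in Set.Ioi (0:ℝ), stdNormalPDF (t + β) := integral_Ioi_shift _ β integrable_pdf
  have hfac : ∀ t : ℝ, stdNormalPDF (t + β) = stdNormalPDF β * Real.exp (-(β*t) - t^2/2) := by
    intro t
    rw [stdNormalPDF, stdNormalPDF, mul_assoc, ← Real.exp_add]
    congr 2
    ring
  have : ∫ t in Set.Ioi (0:ℝ), stdNormalPDF (t + β)
      = stdNormalPDF β * ∫ t in Set.Ioi (0:ℝ), Real.exp (-(β*t) - t^2/2) := by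
    rw [← integral_const_mul]
    exact setIntegral_congr_fun measurableSet_Ioi (fun t _ => hfac t)
  linarith [hsplit, hshift.symm ▸ this]

lemma limit_integrable (β : ℝ) :
    IntegrableOn (fun t : ℝ => Real.exp (-(β*t) - t^2/2)) (Set.Ioi (0:ℝ)) := by
  have := integrable_expquad (-β)
  have h2 : (fun t : ℝ => Real.exp (-β*t - t^2/2)) = fun t => Real.exp (-(β*t) - t^2/2) := by
    funext t; congr 1; ring
  rw [h2] at this
  exact this.integrableOn

lemma limit_pos (β : ℝ) :
    0 < ∫ t in Set.Ioi (0:ℝ), Real.exp (-(β*t) - t^2/2) := by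
  rw [setIntegral_pos_iff_support_of_nonneg_ae]
  · have : Function.support (fun t : ℝ => Real.exp (-(β*t) - t^2/2)) = Set.univ := by
      ext x; simp [Real.exp_ne_zero]
    rw [this, Set.univ_inter, Real.volume_Ioi]
    exact ENNReal.zero_lt_top
  · apply Eventually.of_forall; intro x; positivity
  · exact limit_integrable β

end ErlangAux

open ErlangAux Finset in
set_option maxHeartbeats 1000000 in
/-- Halfin–Whitt / Jagerman asymptotics for Erlang-B under QED (square-root) scaling. -/
theorem erlangB_qed_limit (a : ℕ → ℝ) (β : ℝ)
    (hpos : ∀ N, 0 < a N)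
    (hscale : Tendsto (fun N : ℕ => (a N - N) / Real.sqrt N) atTop (nhds β)) :
    Tendsto (fun N : ℕ => Real.sqrt N * ErlangB N (a N)) atTop
      (nhds (stdNormalPDF β / (1 - stdNormalCDF β))) := by
  classical
  set L : ℝ := ∫ t in Set.Ioi (0:ℝ), Real.exp (-(β*t) - t^2/2) with hL_def
  have hLpos : 0 < L := limit_pos β
  set M : ℝ := |β| + 1 with hM_def
  have hM0 : 0 ≤ M := by positivity
  have hsq := sqrt_nat_tendsto
  have hMev : ∀ᶠ N : ℕ in atTop, |a N - N| ≤ M * Real.sqrt N := by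
    have h : ∀ᶠ N : ℕ in atTop, (a N - N) / Real.sqrt N ∈ Set.Icc (β - 1) (β + 1) :=
      hscale (Icc_mem_nhds (show β - 1 < β by linarith) (show β < β + 1 by linarith))
    filter_upwards [h, eventually_ge_atTop 1] with N hN h1
    rw [Set.mem_Icc] at hN
    have hN' : (0:ℝ) < N := by exact_mod_cast h1
    have hr : 0 < Real.sqrt N := Real.sqrt_pos.2 hN'
    have hcM : |(a N - N) / Real.sqrt N| ≤ M := by
      rw [abs_le]
      have h1' := neg_abs_le β
      have h2' := le_abs_self β
      exact ⟨by linarith [hN.1], by linarith [hN.2]⟩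
    calc |a N - N| = |(a N - N) / Real.sqrt N| * Real.sqrt N := by
          rw [abs_div, abs_of_pos hr]; field_simp
      _ ≤ M * Real.sqrt N := mul_le_mul_of_nonneg_right hcM hr.le
  have hdct : Tendsto (fun N : ℕ => ∫ t in Set.Ioi (0:ℝ), g N (a N) t) atTop (nhds L) := by
    apply tendsto_integral_filter_of_dominated_convergence
      (fun t => Real.exp ((2*M + 3/2) * t - t^2/2))
    · exact Eventually.of_forall fun N =>
        ((g_measurable N (a N)).aestronglyMeasurable).restrict
    · filter_upwards [eventually_ge_atTop 1, hMev, hsq.eventually_ge_atTop (2*M)]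
        with N h1 h2 h3
      rw [ae_restrict_iff' measurableSet_Ioi]
      apply Eventually.of_forall
      intro t ht
      rw [Real.norm_eq_abs, abs_of_nonneg (g_nonneg (hpos N).le t)]
      exact g_bound ht hM0 h1 (hpos N) h2 h3
    · exact (integrable_expquad (2*M + 3/2)).integrableOn
    · rw [ae_restrict_iff' measurableSet_Ioi]
      apply Eventually.of_forall
      intro t ht
      exact g_tendsto a β hpos hscale ht
  have hev_eq : ∀ᶠ N : ℕ in atTop, Real.sqrt N * ErlangB N (a N)
      = (∫ t in Set.Ioi (0:ℝ), g N (a N) t)⁻¹ := by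
    filter_upwards [eventually_ge_atTop 1] with N hN
    have ha := hpos N
    have hN' : (0:ℝ) < N := by exact_mod_cast hN
    have hr : 0 < Real.sqrt N := Real.sqrt_pos.2 hN'
    have hT : 0 < ∑ k ∈ range (N+1), T N (a N) k := by
      have h1 : (1:ℝ) = T N (a N) 0 := (T_zero N (a N)).symm
      calc (0:ℝ) < 1 := one_pos
        _ = T N (a N) 0 := h1
        _ ≤ ∑ k ∈ range (N+1), T N (a N) k :=
            Finset.single_le_sum (fun k _ => T_nonneg ha.le k)
              (Finset.mem_range.mpr (Nat.succ_pos N))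
    have hP : 0 < a N ^ N / (N.factorial : ℝ) := by positivity
    rw [g_integral hN ha.le, ErlangB, sum_eq N ha]
    rw [div_mul_eq_div_div, div_self hP.ne']
    rw [inv_div]
    rw [mul_one_div]
  have hval : stdNormalPDF β / (1 - stdNormalCDF β) = L⁻¹ := by
    rw [one_sub_cdf β]
    have hφ : 0 < stdNormalPDF β := pdf_pos β
    rw [← hL_def]
    field_simp
  rw [hval]
  exact Tendsto.congr' (EventuallyEq.symm hev_eq) (hdct.inv₀ hLpos.ne')
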